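/- Let c₁ > 0 and 0 < δ < 1/2. There is a constant C (depending on c₁, δ) such that for all t ≥ 0 and r ≥ c₁t/2 ≥ 1: ∫_t^∞ ⟨(c₁+1)τ + r − c₁t⟩^{−2+δ} ⟨r − c₁t⟩^{−1/2} dτ ≤ C ⟨t+r⟩^{−1+δ} ⟨r − c₁t⟩^{−1/2}. -/

import Mathlib

noncomputable section

/-- Japanese bracket `⟨s⟩ = (1+s²)^{1/2}`. -/
def jpn (s : ℝ) : ℝ := Real.sqrt (1 + s ^ 2)

lemma jpn_pos (s : ℝ) : 0 < jpn s := by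
  apply Real.sqrt_pos.2; positivity

lemma le_jpn (s : ℝ) : s ≤ jpn s := by
  rcases le_or_gt s 0 with h | h
  · exact h.trans (jpn_pos s).le
  · rw [jpn, show (1:ℝ) + s ^ 2 = 1 + s * s by ring]
    nlinarith [Real.sq_sqrt (show (0:ℝ) ≤ 1 + s * s by positivity),
      Real.sqrt_nonneg (1 + s * s)]

lemma jpn_le_sqrt_two_mul {s : ℝ} (hs : 1 ≤ s) : jpn s ≤ Real.sqrt 2 * s := by
  rw [jpn, show Real.sqrt 2 * s = Real.sqrt (2 * s ^ 2) by
    rw [Real.sqrt_mul (by norm_num), Real.sqrt_sq (by linarith)]]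
  apply Real.sqrt_le_sqrt
  nlinarith

/-- Key integral estimate along outgoing characteristics:
for `r ≥ c₁t/2 ≥ 1`,
`∫_t^∞ ⟨(c₁+1)τ + r - c₁t⟩^{-2+δ} ⟨r - c₁t⟩^{-1/2} dτ
  ≤ C ⟨t+r⟩^{-1+δ} ⟨r - c₁t⟩^{-1/2}`. -/
theorem outgoing_characteristic_integral_estimate
    (c1 δ : ℝ) (hc1 : 0 < c1) (hδ0 : 0 < δ) (hδ : δ < 1 / 2) :
    ∃ C : ℝ, 0 < C ∧
      ∀ t r : ℝ, 0 ≤ t → c1 * t / 2 ≤ r → 1 ≤ c1 * t / 2 →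
        (∫ τ in Set.Ici t,
            jpn ((c1 + 1) * τ + r - c1 * t) ^ (-2 + δ) * jpn (r - c1 * t) ^ (-(1 : ℝ) / 2))
          ≤ C * jpn (t + r) ^ (-1 + δ) * jpn (r - c1 * t) ^ (-(1 : ℝ) / 2) := by
  set a : ℝ := c1 + 1 with ha_def
  have ha : 0 < a := by positivity
  set p : ℝ := -2 + δ with hp_def
  have hp1 : p + 1 < 0 := by rw [hp_def]; linarith
  have hC0 : 0 < Real.sqrt 2 / (a * (1 - δ)) := by
    apply div_pos (Real.sqrt_pos.2 (by norm_num))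
    apply mul_pos ha; linarith
  refine ⟨Real.sqrt 2 / (a * (1 - δ)), hC0, fun t r ht hr h1 => ?_⟩
  set b : ℝ := r - c1 * t with hb_def
  set s : ℝ := t + r with hs_def
  have hs1 : 1 ≤ s := by
    have : 1 ≤ r := le_trans h1 hr
    simp only [hs_def]; linarith
  have hab : a * t + b = s := by rw [ha_def, hb_def, hs_def]; ring
  set K : ℝ := jpn b ^ (-(1 : ℝ) / 2) with hK_def
  have hK : 0 ≤ K := Real.rpow_nonneg (jpn_pos b).le _
  have hrw : ∀ τ : ℝ, a * τ + r - c1 * t = a * τ + b := fun τ => by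
    rw [hb_def]; ring
  simp only [hrw]
  -- argument positivity
  have harg : ∀ x : ℝ, x ∈ Set.Ici t → 1 ≤ a * x + b := by
    intro x hx
    have : a * t + b ≤ a * x + b := by nlinarith [Set.mem_Ici.1 hx]
    rw [hab] at this; linarith
  -- antiderivative
  set G : ℝ → ℝ := fun x => (a * x + b) ^ (p + 1) / (a * (p + 1)) with hG_def
  have hderiv : ∀ x ∈ Set.Ici t, HasDerivAt G ((a * x + b) ^ p) x := by
    intro x hx
    have hx1 : (1:ℝ) ≤ a * x + b := harg x hx
    have h0 : HasDerivAt (fun x : ℝ => a * x + b) a x := by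
      simpa using ((hasDerivAt_id x).const_mul a).add_const b
    have h2 := (h0.rpow_const (p := p + 1) (Or.inl (by linarith : a * x + b ≠ 0))).div_const
      (a * (p + 1))
    have hne : a * (p + 1) ≠ 0 := mul_ne_zero ha.ne' (by linarith)
    refine h2.congr_deriv ?_
    rw [show p + 1 - 1 = p by ring]
    field_simp
    exact div_self (by linarith)
  have htend : Filter.Tendsto G Filter.atTop (nhds 0) := by
    have h1' : Filter.Tendsto (fun x : ℝ => a * x + b) Filter.atTop Filter.atTop :=
      Filter.tendsto_atTop_add_const_right _ b (Filter.Tendsto.const_mul_atTop ha Filter.tendsto_id)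
    have h2' : Filter.Tendsto (fun y : ℝ => y ^ (p + 1)) Filter.atTop (nhds 0) := by
      have := tendsto_rpow_neg_atTop (show 0 < -(p+1) by linarith)
      simpa [neg_neg] using this
    have := (h2'.comp h1').div_const (a * (p + 1))
    simpa [hG_def, Function.comp] using this
  have hpos : ∀ x ∈ Set.Ioi t, 0 ≤ (a * x + b) ^ p := fun x hx =>
    Real.rpow_nonneg (by linarith [harg x (Set.mem_Ici.2 (le_of_lt hx))]) _
  have hint : MeasureTheory.IntegrableOn (fun x => (a * x + b) ^ p) (Set.Ioi t) :=
    MeasureTheory.integrableOn_Ioi_deriv_of_nonneg' hderiv hpos htend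
  have hval : ∫ x in Set.Ioi t, (a * x + b) ^ p = s ^ (p + 1) / (a * (1 - δ)) := by
    rw [MeasureTheory.integral_Ioi_of_hasDerivAt_of_nonneg' hderiv hpos htend, hG_def]
    simp only [hab]
    rw [show a * (1 - δ) = -(a * (p + 1)) by rw [hp_def]; ring, div_neg, zero_sub]
  -- compare integrals
  have hintK : MeasureTheory.IntegrableOn (fun x => (a * x + b) ^ p * K) (Set.Ici t) := by
    rw [integrableOn_Ici_iff_integrableOn_Ioi]
    exact hint.mul_const K
  have hmono : (∫ τ in Set.Ici t, jpn (a * τ + b) ^ p * K)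
      ≤ ∫ τ in Set.Ici t, (a * τ + b) ^ p * K := by
    apply MeasureTheory.integral_mono_of_nonneg
    · filter_upwards with x
      exact mul_nonneg (Real.rpow_nonneg (jpn_pos _).le _) hK
    · exact hintK
    · filter_upwards [MeasureTheory.ae_restrict_mem measurableSet_Ici] with x hx
      apply mul_le_mul_of_nonneg_right _ hK
      exact Real.rpow_le_rpow_of_nonpos (by linarith [harg x hx]) (le_jpn _)
        (by rw [hp_def]; linarith)
  have hcalc : (∫ τ in Set.Ici t, (a * τ + b) ^ p * K)
      = s ^ (p + 1) / (a * (1 - δ)) * K := by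
    rw [MeasureTheory.integral_mul_const, MeasureTheory.integral_Ici_eq_integral_Ioi, hval]
  -- s^(p+1) ≤ √2 * jpn s ^ (p+1)
  have hsle : s ^ (p + 1) ≤ Real.sqrt 2 * jpn s ^ (p + 1) := by
    have hjs : jpn s ≤ Real.sqrt 2 * s := jpn_le_sqrt_two_mul hs1
    have h2 : (Real.sqrt 2 * s) ^ (p + 1) ≤ jpn s ^ (p + 1) :=
      Real.rpow_le_rpow_of_nonpos (jpn_pos s) hjs hp1.le
    have h3 : (Real.sqrt 2 * s) ^ (p + 1)
        = Real.sqrt 2 ^ (p + 1) * s ^ (p + 1) :=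
      Real.mul_rpow (Real.sqrt_nonneg 2) (by linarith)
    have h4 : Real.sqrt 2 ^ (-1 : ℝ) ≤ Real.sqrt 2 ^ (p + 1) := by
      apply Real.rpow_le_rpow_of_exponent_le
      · nlinarith [Real.sq_sqrt (show (0:ℝ) ≤ 2 by norm_num), Real.sqrt_nonneg 2]
      · rw [hp_def]; linarith
    have h5 : Real.sqrt 2 ^ (-1 : ℝ) = (Real.sqrt 2)⁻¹ := Real.rpow_neg_one _
    have hs2 : (0:ℝ) < Real.sqrt 2 := Real.sqrt_pos.2 (by norm_num)
    have hspow : 0 ≤ s ^ (p + 1) := Real.rpow_nonneg (by linarith) _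
    have h6 : (Real.sqrt 2)⁻¹ * s ^ (p + 1) ≤ jpn s ^ (p + 1) := by
      calc (Real.sqrt 2)⁻¹ * s ^ (p + 1)
          ≤ Real.sqrt 2 ^ (p + 1) * s ^ (p + 1) :=
            mul_le_mul_of_nonneg_right (h5 ▸ h4) hspow
        _ = (Real.sqrt 2 * s) ^ (p + 1) := h3.symm
        _ ≤ jpn s ^ (p + 1) := h2
    calc s ^ (p + 1) = Real.sqrt 2 * ((Real.sqrt 2)⁻¹ * s ^ (p + 1)) := by
          field_simp
      _ ≤ Real.sqrt 2 * jpn s ^ (p + 1) := mul_le_mul_of_nonneg_left h6 hs2.le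
  calc (∫ τ in Set.Ici t, jpn (a * τ + b) ^ p * K)
      ≤ s ^ (p + 1) / (a * (1 - δ)) * K := by rw [← hcalc]; exact hmono
    _ ≤ Real.sqrt 2 * jpn s ^ (p + 1) / (a * (1 - δ)) * K := by
        apply mul_le_mul_of_nonneg_right _ hK
        exact (div_le_div_iff_of_pos_right (mul_pos ha (by linarith))).2 hsle
    _ = Real.sqrt 2 / (a * (1 - δ)) * jpn s ^ (-1 + δ) * K := by
        rw [show p + 1 = -1 + δ by rw [hp_def]; ring]; ring
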